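/- Let κ = 3^{2/3}/2^{1/3} (so that κ^{3/2} = 3/√2) and θ̄ ∈ ℝ. The curve (r̃(τ), θ̃(τ), ṽ(τ), ũ(τ)) = (κ e^{√2 τ}, θ̄ − e^{(3/√2)τ}, √2, −κ^{3/2} e^{(3/√2)τ}), τ ∈ ℝ, is a solution of the McGehee-regularized system with μ = 0: r' = r v, θ' = u, v' = v²/2 + u² + 2u r^{3/2} + r³ − 1, u' = −uv/2 − 2v r^{3/2}; and it satisfies lim_{τ→−∞} (r̃(τ), θ̃(τ), ṽ(τ), ũ(τ)) = (0, θ̄, √2, 0), i.e. it lies in the unstable set of the equilibrium (0, θ̄, √2, 0) on the collision manifold {r = 0}. -/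

import Mathlib

open Real Filter
open scoped Topology

/-- The constant `κ = 3^{2/3}/2^{1/3}`. -/
noncomputable def kap : ℝ := (3 : ℝ) ^ ((2 : ℝ) / 3) / (2 : ℝ) ^ ((1 : ℝ) / 3)

/-- `r`-component of the explicit ejection solution. -/
noncomputable def rTil (τ : ℝ) : ℝ := kap * Real.exp (Real.sqrt 2 * τ)

/-- `θ`-component of the explicit ejection solution. -/
noncomputable def thetaTil (θb τ : ℝ) : ℝ := θb - Real.exp (3 / Real.sqrt 2 * τ)

/-- `v`-component of the explicit ejection solution. -/
noncomputable def vTil (_τ : ℝ) : ℝ := Real.sqrt 2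

/-- `u`-component of the explicit ejection solution. -/
noncomputable def uTil (τ : ℝ) : ℝ :=
  -(kap ^ ((3 : ℝ) / 2) * Real.exp (3 / Real.sqrt 2 * τ))

lemma sqrt2_pos : (0:ℝ) < Real.sqrt 2 := Real.sqrt_pos.2 (by norm_num)

lemma sqrt2_sq : Real.sqrt 2 * Real.sqrt 2 = 2 := Real.mul_self_sqrt (by norm_num)

lemma kap_nonneg : (0:ℝ) ≤ kap := by unfold kap; positivity

lemma kap_pow : kap ^ ((3 : ℝ) / 2) = 3 / Real.sqrt 2 := by
  unfold kap
  rw [Real.div_rpow (by positivity) (by positivity),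
    ← Real.rpow_mul (by norm_num), ← Real.rpow_mul (by norm_num)]
  norm_num
  rw [Real.sqrt_eq_rpow]

lemma kap_cube : kap ^ (3:ℕ) = 9 / 2 := by
  rw [← Real.rpow_natCast kap 3]
  unfold kap
  rw [Real.div_rpow (by positivity) (by positivity),
    ← Real.rpow_mul (by norm_num), ← Real.rpow_mul (by norm_num)]
  norm_num

lemma rTil_rpow (τ : ℝ) :
    (rTil τ) ^ ((3 : ℝ) / 2) = 3 / Real.sqrt 2 * Real.exp (3 / Real.sqrt 2 * τ) := by
  unfold rTil
  rw [Real.mul_rpow kap_nonneg (Real.exp_nonneg _), kap_pow, ← Real.exp_mul]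
  congr 2
  field_simp
  linear_combination τ * sqrt2_sq

lemma exp_sqrt2_cube (τ : ℝ) :
    Real.exp (Real.sqrt 2 * τ) ^ (3:ℕ) = Real.exp (3 / Real.sqrt 2 * τ) ^ (2:ℕ) := by
  rw [← Real.exp_nat_mul, ← Real.exp_nat_mul]
  congr 1
  have h := sqrt2_sq
  field_simp
  linear_combination 3 * τ * h

/-- The curve `(κ e^{√2 τ}, θ̄ - e^{(3/√2)τ}, √2, -κ^{3/2} e^{(3/√2)τ})` solves the
McGehee-regularized system with `μ = 0`:
`r' = rv`, `θ' = u`, `v' = v²/2 + u² + 2u r^{3/2} + r³ - 1`, `u' = -uv/2 - 2v r^{3/2}`,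
and tends to the equilibrium `(0, θ̄, √2, 0)` on the collision manifold as `τ → -∞`. -/
theorem explicit_ejection_solution_mu_zero (θb : ℝ) :
    (∀ τ : ℝ, HasDerivAt rTil (rTil τ * vTil τ) τ) ∧
    (∀ τ : ℝ, HasDerivAt (thetaTil θb) (uTil τ) τ) ∧
    (∀ τ : ℝ, HasDerivAt vTil
      ((vTil τ) ^ 2 / 2 + (uTil τ) ^ 2 + 2 * uTil τ * (rTil τ) ^ ((3 : ℝ) / 2)
        + (rTil τ) ^ 3 - 1) τ) ∧
    (∀ τ : ℝ, HasDerivAt uTil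
      (-(uTil τ * vTil τ) / 2 - 2 * vTil τ * (rTil τ) ^ ((3 : ℝ) / 2)) τ) ∧
    Tendsto (fun τ => (rTil τ, thetaTil θb τ, vTil τ, uTil τ)) atBot
      (𝓝 (0, θb, Real.sqrt 2, 0)) := by
  have hs := sqrt2_sq
  have hsp := sqrt2_pos
  have hE : ∀ c τ : ℝ, HasDerivAt (fun t => Real.exp (c * t)) (c * Real.exp (c * τ)) τ := by
    intro c τ
    simpa [mul_comm] using ((hasDerivAt_id τ).const_mul c).exp
  refine ⟨fun τ => ?_, fun τ => ?_, fun τ => ?_, fun τ => ?_, ?_⟩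
  · have h := (hE (Real.sqrt 2) τ).const_mul kap
    have e : rTil τ * vTil τ = kap * (Real.sqrt 2 * Real.exp (Real.sqrt 2 * τ)) := by
      simp only [rTil, vTil]; ring
    rw [e]; exact h
  · have := ((hE (3 / Real.sqrt 2) τ)).const_mul (1:ℝ)
    have h2 := (hasDerivAt_const τ θb).sub (hE (3 / Real.sqrt 2) τ)
    refine (h2.congr_deriv ?_)
    unfold uTil
    rw [kap_pow]; ring
  · have h0 : HasDerivAt vTil 0 τ := hasDerivAt_const τ _
    refine h0.congr_deriv ?_
    rw [rTil_rpow]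
    unfold vTil uTil rTil
    rw [mul_pow, kap_cube, exp_sqrt2_cube]
    have h32 : kap ^ ((3:ℝ)/2) = 3 / Real.sqrt 2 := kap_pow
    rw [h32]
    set E := Real.exp (3 / Real.sqrt 2 * τ)
    have h2 : Real.sqrt 2 ^ 2 = 2 := by rw [sq, hs]
    field_simp
    nlinarith [hs, sq_nonneg E]
  · have h2 := ((hE (3 / Real.sqrt 2) τ).const_mul (kap ^ ((3:ℝ)/2))).neg
    refine h2.congr_deriv ?_
    rw [rTil_rpow]
    unfold uTil vTil
    rw [kap_pow]
    field_simp
    ring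
    nlinarith [hs]
  · have hlim : ∀ c : ℝ, 0 < c → Tendsto (fun τ => Real.exp (c * τ)) atBot (𝓝 0) := by
      intro c hc
      have : Tendsto (fun τ : ℝ => c * τ) atBot atBot := tendsto_id.const_mul_atBot hc
      exact Real.tendsto_exp_atBot.comp this
    have h32 : (0:ℝ) < 3 / Real.sqrt 2 := by positivity
    rw [nhds_prod_eq, nhds_prod_eq, nhds_prod_eq]
    refine Tendsto.prodMk ?_ (Tendsto.prodMk ?_ (Tendsto.prodMk ?_ ?_))
    · show Tendsto (fun τ => kap * Real.exp (Real.sqrt 2 * τ)) atBot (𝓝 0)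
      simpa using (hlim _ sqrt2_pos).const_mul kap
    · show Tendsto (fun τ => θb - Real.exp (3 / Real.sqrt 2 * τ)) atBot (𝓝 θb)
      simpa using tendsto_const_nhds.sub (hlim _ h32)
    · exact tendsto_const_nhds
    · show Tendsto (fun τ => -(kap ^ ((3 : ℝ) / 2) * Real.exp (3 / Real.sqrt 2 * τ))) atBot (𝓝 0)
      simpa using ((hlim _ h32).const_mul (kap ^ ((3:ℝ)/2))).neg
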